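/- Let ν be a σ-finite Borel measure on ℝ^d with ν({0}) = 0, and define the measure ν̃ on ℝ^d ∖ {0} by ν̃(B) = ∫₀^∞ ν({y : e^{-s} y ∈ B}) ds. Then for every integer m ≥ 0, ∫_{{|x| > 1}} (log |x|)^m ν̃(dx) = (m+1)^{-1} ∫_{{|y| > 1}} (log |y|)^{m+1} ν(dy), where both sides may be infinite simultaneously. -/

import Mathlib

open MeasureTheory
open scoped ENNReal

lemma inner_int (L : ℝ) (hL : 0 < L) (m : ℕ) :
    ∫⁻ s in Set.Ioo (0:ℝ) L, ENNReal.ofReal ((L - s) ^ m) =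
      ENNReal.ofReal (L ^ (m+1) / (m+1)) := by
  have hcont : Continuous fun s : ℝ => (L - s) ^ m := by continuity
  have hint : IntegrableOn (fun s : ℝ => (L - s) ^ m) (Set.Ioo 0 L) :=
    (hcont.integrableOn_Icc (a := 0) (b := L)).mono_set Set.Ioo_subset_Icc_self
  rw [← ofReal_integral_eq_lintegral_ofReal hint]
  · congr 1
    have h1 : ∫ s in Set.Ioo (0:ℝ) L, (L - s) ^ m =
        ∫ s in (0:ℝ)..L, (L - s) ^ m := by
      rw [intervalIntegral.integral_of_le hL.le, integral_Ioc_eq_integral_Ioo]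
    rw [h1, intervalIntegral.integral_comp_sub_left (fun x => x ^ m) L]
    simp [integral_pow]
  · filter_upwards [ae_restrict_mem measurableSet_Ioo] with s hs
    have : 0 ≤ L - s := by linarith [hs.2]
    positivity

set_option maxHeartbeats 1000000 in
/-- If `ν̃(B) = ∫₀^∞ ν({y : e^{-s}y ∈ B}) ds` on `ℝ^d ∖ {0}`, then for every `m ≥ 0`,
`∫_{|x|>1} (log|x|)^m ν̃(dx) = (m+1)⁻¹ ∫_{|y|>1} (log|y|)^{m+1} ν(dy)`
(both sides possibly infinite simultaneously). -/
theorem stmt_10 (d : ℕ) (hd : 1 ≤ d)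
    (ν : Measure (EuclideanSpace ℝ (Fin d))) [SigmaFinite ν]
    (hν0 : ν {0} = 0)
    (νt : Measure (EuclideanSpace ℝ (Fin d)))
    (hνt : ∀ B : Set (EuclideanSpace ℝ (Fin d)), MeasurableSet B → B ⊆ {0}ᶜ →
      νt B = ∫⁻ s in Set.Ioi (0 : ℝ), ν {y | Real.exp (-s) • y ∈ B})
    (m : ℕ) :
    ∫⁻ x in {x : EuclideanSpace ℝ (Fin d) | 1 < ‖x‖},
        ENNReal.ofReal (Real.log ‖x‖ ^ m) ∂νt =
      ((m : ℝ≥0∞) + 1)⁻¹ *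
        ∫⁻ y in {y : EuclideanSpace ℝ (Fin d) | 1 < ‖y‖},
          ENNReal.ofReal (Real.log ‖y‖ ^ (m + 1)) ∂ν := by
  set E := EuclideanSpace ℝ (Fin d)
  set S : Set E := {x : E | 1 < ‖x‖} with hS
  have hSmeas : MeasurableSet S := measurableSet_lt measurable_const measurable_norm
  -- the scaling map
  set Φ : ℝ → E → E := fun s y => Real.exp (-s) • y with hΦ
  have hΦcont : Continuous (fun p : ℝ × E => Φ p.1 p.2) := by
    fun_prop
  have hΦmeas : Measurable (fun p : ℝ × E => Φ p.1 p.2) := hΦcont.measurable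
  have hΦs : ∀ s, Measurable (Φ s) := fun s =>
    (hΦcont.comp (Continuous.prodMk_right s)).measurable
  -- the kernel
  set κ : ℝ → Measure E := fun s => ν.map (Φ s) with hκdef
  have hκ : Measurable κ := by
    apply Measure.measurable_of_measurable_coe
    intro B hB
    have : (fun s => κ s B) = fun s => ∫⁻ y, (Φ s ⁻¹' B).indicator (fun _ => 1) y ∂ν := by
      funext s
      rw [lintegral_indicator ((hΦs s) hB), setLIntegral_one, Measure.map_apply (hΦs s) hB]
    rw [this]
    apply Measurable.lintegral_prod_right (f := fun s y => (Φ s ⁻¹' B).indicator (fun _ => 1) y)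
    exact (measurable_const.indicator hB).comp hΦmeas
  set μb : Measure E := Measure.bind ((volume : Measure ℝ).restrict (Set.Ioi 0)) κ with hμb
  -- νt and μb agree on subsets of S
  have hrestr : νt.restrict S = μb.restrict S := by
    ext B hB
    rw [Measure.restrict_apply hB, Measure.restrict_apply hB,
      Measure.bind_apply (hB.inter hSmeas) hκ.aemeasurable,
      hνt (B ∩ S) (hB.inter hSmeas) (fun x hx => by
        simp only [Set.mem_compl_iff, Set.mem_singleton_iff]
        intro h0
        have h2 := hx.2
        rw [h0] at h2
        simp [hS] at h2
        exact absurd h2 (by intro h; have h' : (1:ℝ) < ‖(0:EuclideanSpace ℝ (Fin d))‖ := h; rw [norm_zero] at h'; linarith))]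
    refine setLIntegral_congr_fun measurableSet_Ioi (fun s _ => ?_)
    rw [Measure.map_apply (hΦs s) (hB.inter hSmeas)]
    rfl
  -- rewrite LHS through the bind
  set g : E → ℝ≥0∞ := fun x => ENNReal.ofReal (Real.log ‖x‖ ^ m) with hg
  have hgmeas : Measurable g :=
    (measurable_norm.log.pow_const m).ennreal_ofReal
  have step1 : ∫⁻ x in S, g x ∂νt = ∫⁻ x, S.indicator g x ∂μb := by
    rw [show ∫⁻ x in S, g x ∂νt = ∫⁻ x, g x ∂(νt.restrict S) from rfl, hrestr,
      ← lintegral_indicator hSmeas]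
  rw [step1, hμb, Measure.lintegral_bind hκ.aemeasurable (hgmeas.indicator hSmeas).aemeasurable]
  -- into a double integral over ν
  have step2 : ∀ s, ∫⁻ x, S.indicator g x ∂(κ s) = ∫⁻ y, S.indicator g (Φ s y) ∂ν := by
    intro s
    rw [hκdef]
    exact lintegral_map (hgmeas.indicator hSmeas) (hΦs s)
  simp_rw [step2]
  -- swap
  have hswap : AEMeasurable
      (Function.uncurry fun s y => S.indicator g (Φ s y))
      (((volume : Measure ℝ).restrict (Set.Ioi 0)).prod ν) :=
    (((hgmeas.indicator hSmeas).comp hΦmeas) :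
      Measurable fun p : ℝ × E => S.indicator g (Φ p.1 p.2)).aemeasurable
  rw [lintegral_lintegral_swap hswap]
  -- inner integral computation
  have key : ∀ y : E, ∫⁻ s in Set.Ioi (0:ℝ), S.indicator g (Φ s y) =
      S.indicator (fun y => ENNReal.ofReal (Real.log ‖y‖ ^ (m+1) / (m+1))) y := by
    intro y
    by_cases hy : 1 < ‖y‖
    · have hL : 0 < Real.log ‖y‖ := Real.log_pos hy
      set L := Real.log ‖y‖ with hLdef
      have hnorm : ∀ s : ℝ, ‖Φ s y‖ = Real.exp (-s) * ‖y‖ := by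
        intro s
        rw [norm_smul, Real.norm_eq_abs, abs_of_pos (Real.exp_pos _)]
      have hy0 : 0 < ‖y‖ := lt_trans one_pos hy
      have hlog : ∀ s : ℝ, Real.log ‖Φ s y‖ = L - s := by
        intro s
        rw [hnorm, Real.log_mul (Real.exp_pos _).ne' hy0.ne', Real.log_exp]
        ring
      have hmem : ∀ s : ℝ, Φ s y ∈ S ↔ s < L := by
        intro s
        simp only [hS, Set.mem_setOf_eq, hnorm]
        rw [← Real.exp_log hy0, ← Real.exp_add, Real.one_lt_exp_iff, hLdef]
        constructor <;> intro h <;> linarith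
      have heq : ∀ s ∈ Set.Ioi (0:ℝ), S.indicator g (Φ s y) =
          (Set.Ioo (0:ℝ) L).indicator (fun s => ENNReal.ofReal ((L - s) ^ m)) s := by
        intro s hs
        by_cases hsL : s < L
        · rw [Set.indicator_of_mem ((hmem s).mpr hsL), Set.indicator_of_mem (Set.mem_Ioo.mpr ⟨Set.mem_Ioi.mp hs, hsL⟩),
            hg]
          simp only [hlog]
        · rw [Set.indicator_of_notMem (fun h => hsL ((hmem s).mp h)),
            Set.indicator_of_notMem (fun h => hsL h.2)]
      rw [setLIntegral_congr_fun measurableSet_Ioi heq,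
        lintegral_indicator measurableSet_Ioo, Measure.restrict_restrict measurableSet_Ioo,
        Set.inter_eq_self_of_subset_left (fun s hs => hs.1), inner_int L hL m,
        Set.indicator_of_mem (show y ∈ S from hy)]
    · have hz : ∀ s ∈ Set.Ioi (0:ℝ), S.indicator g (Φ s y) = 0 := by
        intro s hs
        apply Set.indicator_of_notMem
        simp only [hS, Set.mem_setOf_eq, not_lt]
        calc ‖Φ s y‖ = Real.exp (-s) * ‖y‖ := by
              rw [norm_smul, Real.norm_eq_abs, abs_of_pos (Real.exp_pos _)]
          _ ≤ 1 * ‖y‖ := by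
              apply mul_le_mul_of_nonneg_right _ (norm_nonneg _)
              exact Real.exp_le_one_iff.mpr (by have := Set.mem_Ioi.mp hs; linarith)
          _ = ‖y‖ := one_mul _
          _ ≤ 1 := not_lt.mp hy
      rw [setLIntegral_congr_fun measurableSet_Ioi hz,
        lintegral_zero, Set.indicator_of_notMem (show y ∉ S from hy)]
  simp_rw [key]
  -- conclude
  rw [lintegral_indicator hSmeas]
  have hconst : ∀ y ∈ S, ENNReal.ofReal (Real.log ‖y‖ ^ (m+1) / (m+1)) =
      ((m : ℝ≥0∞) + 1)⁻¹ * ENNReal.ofReal (Real.log ‖y‖ ^ (m+1)) := by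
    intro y hy
    have h1 : (0:ℝ) ≤ Real.log ‖y‖ ^ (m+1) :=
      pow_nonneg (Real.log_nonneg (le_of_lt hy)) _
    rw [div_eq_mul_inv, mul_comm, ENNReal.ofReal_mul (by positivity)]
    congr 1
    rw [ENNReal.ofReal_inv_of_pos (by positivity)]
    congr 1
    rw [show ((m:ℝ) + 1) = ((m+1 : ℕ) : ℝ) by push_cast; ring, ENNReal.ofReal_natCast]
    push_cast; ring
  rw [setLIntegral_congr_fun hSmeas hconst,
    lintegral_const_mul _ ((measurable_norm.log.pow_const (m+1)).ennreal_ofReal)]
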